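/- Let 0 < x ≤ π and a > 0, and let ψ : [0,π] → ℝ be a measurable nonnegative function satisfying ψ(θ) ≤ (a/x)·θ for all θ ∈ [0,x]. Then ∫₀^π max(a − ψ(θ), 0)·sin θ dθ ≥ a·(1 − (sin x)/x). -/

import Mathlib

open Real MeasureTheory Set

/-- Lower bound: if a measurable nonnegative `ψ` on `[0,π]` satisfies
`ψ θ ≤ (a/x)·θ` on `[0,x]`, then `∫₀^π max(a - ψ θ, 0) sin θ dθ ≥ a (1 - sin x / x)`. -/
theorem lower_bound_integral (x a : ℝ) (hx : 0 < x) (hxπ : x ≤ π) (ha : 0 < a)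
    (ψ : ℝ → ℝ)
    (hmeas : Measurable ψ)
    (hnonneg : ∀ θ ∈ Icc (0:ℝ) π, 0 ≤ ψ θ)
    (hle : ∀ θ ∈ Icc (0:ℝ) x, ψ θ ≤ (a / x) * θ) :
    a * (1 - Real.sin x / x) ≤ ∫ θ in (0:ℝ)..π, max (a - ψ θ) 0 * Real.sin θ := by
  set f : ℝ → ℝ := fun θ => max (a - ψ θ) 0 * Real.sin θ with hf
  have hmf : Measurable f :=
    ((measurable_const.sub hmeas).max measurable_const).mul Real.measurable_sin
  -- integrability of f on [0, π]
  have hIo : IntegrableOn f (Icc (0:ℝ) π) := by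
    refine Measure.integrableOn_of_bounded (M := a + 1) (measure_Icc_lt_top).ne
      hmf.aestronglyMeasurable
      ((ae_restrict_iff' measurableSet_Icc).2 (ae_of_all _ fun θ hθ => ?_))
    have h1 : 0 ≤ Real.sin θ := Real.sin_nonneg_of_nonneg_of_le_pi hθ.1 hθ.2
    have h2 : Real.sin θ ≤ 1 := Real.sin_le_one θ
    have h3 : (0:ℝ) ≤ max (a - ψ θ) 0 := le_max_right _ _
    have h4 : max (a - ψ θ) 0 ≤ a := max_le (by linarith [hnonneg θ hθ]) ha.le
    have : f θ ≤ a * 1 := mul_le_mul h4 h2 h1 ha.le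
    rw [Real.norm_eq_abs, abs_of_nonneg (mul_nonneg h3 h1)]
    nlinarith
  have hint : ∀ u v : ℝ, u ∈ Icc (0:ℝ) π → v ∈ Icc (0:ℝ) π →
      IntervalIntegrable f volume u v := by
    intro u v hu hv
    refine IntegrableOn.intervalIntegrable (hIo.mono_set ?_)
    intro t ht
    rcases ht with ⟨h1, h2⟩
    constructor
    · exact le_trans (le_min hu.1 hv.1) h1
    · exact le_trans h2 (max_le hu.2 hv.2)
  have hxmem : x ∈ Icc (0:ℝ) π := ⟨hx.le, hxπ⟩
  have h0mem : (0:ℝ) ∈ Icc (0:ℝ) π := ⟨le_refl _, Real.pi_pos.le⟩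
  have hπmem : π ∈ Icc (0:ℝ) π := ⟨Real.pi_pos.le, le_refl _⟩
  have hint1 := hint 0 x h0mem hxmem
  have hint2 := hint x π hxmem hπmem
  have hsplit : ∫ θ in (0:ℝ)..π, f θ = (∫ θ in (0:ℝ)..x, f θ) + ∫ θ in x..π, f θ :=
    (intervalIntegral.integral_add_adjacent_intervals hint1 hint2).symm
  have htail : 0 ≤ ∫ θ in x..π, f θ := by
    apply intervalIntegral.integral_nonneg hxπ
    intro θ hθ
    exact mul_nonneg (le_max_right _ _)
      (Real.sin_nonneg_of_nonneg_of_le_pi (le_trans hx.le hθ.1) hθ.2)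
  set g : ℝ → ℝ := fun θ => (a - (a / x) * θ) * Real.sin θ with hgdef
  have hgcont : Continuous g := by
    apply Continuous.mul
    · exact continuous_const.sub (continuous_const.mul continuous_id)
    · exact Real.continuous_sin
  have hgint : IntervalIntegrable g volume 0 x := hgcont.intervalIntegrable 0 x
  have hmono : (∫ θ in (0:ℝ)..x, g θ) ≤ ∫ θ in (0:ℝ)..x, f θ := by
    apply intervalIntegral.integral_mono_on hx.le hgint hint1
    intro θ hθ
    have hsin : 0 ≤ Real.sin θ :=
      Real.sin_nonneg_of_nonneg_of_le_pi hθ.1 (hθ.2.trans hxπ)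
    have h1 : a - (a / x) * θ ≤ max (a - ψ θ) 0 :=
      le_trans (by linarith [hle θ hθ]) (le_max_left _ _)
    exact mul_le_mul_of_nonneg_right h1 hsin
  -- compute ∫₀ˣ g
  set F : ℝ → ℝ := fun θ => -a * Real.cos θ - (a / x) * (Real.sin θ - θ * Real.cos θ)
    with hFdef
  have hderiv : ∀ θ ∈ uIcc (0:ℝ) x, HasDerivAt F (g θ) θ := by
    intro θ _
    have h1 : HasDerivAt (fun t => -a * Real.cos t) (-a * (-Real.sin θ)) θ :=
      (Real.hasDerivAt_cos θ).const_mul (-a)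
    have h2 : HasDerivAt (fun t : ℝ => t * Real.cos t)
        (1 * Real.cos θ + θ * (-Real.sin θ)) θ :=
      (hasDerivAt_id θ).mul (Real.hasDerivAt_cos θ)
    have h3 : HasDerivAt (fun t => Real.sin t - t * Real.cos t)
        (Real.cos θ - (1 * Real.cos θ + θ * (-Real.sin θ))) θ :=
      (Real.hasDerivAt_sin θ).sub h2
    have h4 : HasDerivAt (fun t => -a * Real.cos t - a / x * (Real.sin t - t * Real.cos t)) _ θ :=
      h1.sub (h3.const_mul (a / x))
    convert h4 using 1
    simp only [hgdef]
    ring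
  have hcomp : (∫ θ in (0:ℝ)..x, g θ) = F x - F 0 :=
    intervalIntegral.integral_eq_sub_of_hasDerivAt hderiv hgint
  have hFval : F x - F 0 = a * (1 - Real.sin x / x) := by
    simp only [hFdef, Real.cos_zero, Real.sin_zero]
    field_simp
    ring
  rw [hsplit]
  calc a * (1 - Real.sin x / x) = F x - F 0 := hFval.symm
    _ = ∫ θ in (0:ℝ)..x, g θ := hcomp.symm
    _ ≤ ∫ θ in (0:ℝ)..x, f θ := hmono
    _ ≤ (∫ θ in (0:ℝ)..x, f θ) + ∫ θ in x..π, f θ := le_add_of_nonneg_right htail
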